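/- A semisimple real Lie algebra with negative definite Killing form (i.e., of compact type) admits no cyclic inner product. -/

import Mathlib

open Module.End in
/-- A (nontrivial) semisimple real Lie algebra of compact type, i.e. with
negative definite Killing form, admits no cyclic inner product. -/
theorem compact_type_no_cyclic {L : Type*} [LieRing L] [LieAlgebra ℝ L]
    [FiniteDimensional ℝ L] [Nontrivial L] [LieAlgebra.IsSemisimple ℝ L]
    (hneg : ∀ x : L, x ≠ 0 → killingForm ℝ L x x < 0) :
    ¬ ∃ B : L →ₗ[ℝ] L →ₗ[ℝ] ℝ,
        (∀ x y : L, B x y = B y x) ∧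
        (∀ x : L, x ≠ 0 → 0 < B x x) ∧
        (∀ X Y Z : L, B ⁅X, Y⁆ Z + B ⁅Y, Z⁆ X + B ⁅Z, X⁆ Y = 0) := by
  rintro ⟨B, hsymm, hpos, hcyc⟩
  set κ : LinearMap.BilinForm ℝ L := killingForm ℝ L with hκdef
  have hκsymm : ∀ x y : L, κ x y = κ y x := fun x y => LieModule.traceForm_comm ℝ L L x y
  have hκinv : ∀ x y z : L, κ ⁅x, y⁆ z = κ x ⁅y, z⁆ := fun x y z =>
    LieModule.traceForm_apply_lie_apply ℝ L L x y z
  have hκnd : κ.Nondegenerate := by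
    constructor
    all_goals
      intro x hx
      by_contra hx0
      exact absurd (hx x) (ne_of_lt (hneg x hx0))
  -- construct φ with κ (φ x) y = B x y
  set φ : L →ₗ[ℝ] L := ((κ.toDual hκnd).symm.toLinearMap) ∘ₗ B with hφdef
  have hφ : ∀ x y : L, κ (φ x) y = B x y := fun x y =>
    LinearMap.BilinForm.apply_toDual_symm_apply (hB := hκnd) (f := B x) (v := y)
  -- the cyclic condition makes φ an anti-derivation
  have hanti : ∀ x y : L, φ ⁅x, y⁆ = -⁅φ x, y⁆ - ⁅x, φ y⁆ := by
    intro x y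
    have key : φ ⁅x, y⁆ + ⁅φ x, y⁆ + ⁅x, φ y⁆ = 0 := by
      apply hκnd.1
      intro z
      have h1 : κ (φ ⁅x, y⁆) z = B ⁅x, y⁆ z := hφ _ _
      have h2 : κ ⁅φ x, y⁆ z = B ⁅y, z⁆ x := by
        rw [hκinv, hφ, hsymm]
      have h3 : κ ⁅x, φ y⁆ z = B ⁅z, x⁆ y := by
        calc κ ⁅x, φ y⁆ z = κ x ⁅φ y, z⁆ := hκinv _ _ _
          _ = κ ⁅φ y, z⁆ x := hκsymm _ _
          _ = κ (φ y) ⁅z, x⁆ := hκinv _ _ _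
          _ = B y ⁅z, x⁆ := hφ _ _
          _ = B ⁅z, x⁆ y := hsymm _ _
      have hc := hcyc x y z
      simp only [map_add, LinearMap.add_apply, h1, h2, h3]
      linarith
    linear_combination (norm := module) key
  -- inner product structure coming from -κ
  letI core : InnerProductSpace.Core ℝ L :=
    { inner := fun x y => -κ x y
      conj_inner_symm := fun x y => by simpa using hκsymm y x ▸ rfl
      re_inner_nonneg := fun x => by
        rcases eq_or_ne x 0 with rfl | hx
        · simp
        · simpa using le_of_lt (hneg x hx)
      add_left := fun x y z => by simp only [map_add, LinearMap.add_apply]; ring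
      smul_left := fun x y r => by simp only [map_smul, LinearMap.smul_apply, smul_eq_mul, starRingEnd_apply, star_trivial]; ring
      definite := fun x hx => by
        by_contra hx0
        have := hneg x hx0
        simp only [neg_eq_zero] at hx
        rw [hx] at this
        exact lt_irrefl 0 this }
  letI : NormedAddCommGroup L := core.toNormedAddCommGroup
  letI : InnerProductSpace ℝ L := InnerProductSpace.ofCore core.toCore
  have hinner : ∀ x y : L, (inner ℝ x y : ℝ) = -κ x y := fun _ _ => rfl
  have hφsym : φ.IsSymmetric := by
    intro x y
    rw [hinner, hinner]
    rw [hφ, hsymm, ← hφ, hκsymm]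
  -- all eigenvalues of φ are negative
  have hev : ∀ (μ : ℝ) (x : L), x ∈ eigenspace φ μ → x ≠ 0 → μ < 0 := by
    intro μ x hx hx0
    rw [mem_eigenspace_iff] at hx
    have h1 : B x x = μ * κ x x := by rw [← hφ, hx, map_smul]; simp
    have h2 := hpos x hx0
    have h3 := hneg x hx0
    nlinarith
  -- brackets between eigenvectors vanish
  have hbr : ∀ (μ ν : ℝ) (x y : L), x ∈ eigenspace φ μ → y ∈ eigenspace φ ν → ⁅x, y⁆ = 0 := by
    intro μ ν x y hx hy
    by_contra h
    have hx0 : x ≠ 0 := by rintro rfl; simp at h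
    have hy0 : y ≠ 0 := by rintro rfl; simp at h
    have hμ := hev μ x hx hx0
    have hν := hev ν y hy hy0
    rw [mem_eigenspace_iff] at hx hy
    have hmem : ⁅x, y⁆ ∈ eigenspace φ (-(μ + ν)) := by
      rw [mem_eigenspace_iff, hanti, hx, hy, smul_lie, lie_smul]
      module
    have := hev _ _ hmem h
    linarith
  -- eigenspaces span, so L is abelian
  have htop : (⨆ μ : ℝ, eigenspace φ μ) = ⊤ :=
    Submodule.orthogonal_eq_bot_iff.mp hφsym.orthogonalComplement_iSup_eigenspaces_eq_bot
  have habelian : ∀ x y : L, ⁅x, y⁆ = 0 := by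
    intro x y
    have hx : x ∈ ⨆ μ : ℝ, eigenspace φ μ := htop ▸ Submodule.mem_top
    have hy : y ∈ ⨆ μ : ℝ, eigenspace φ μ := htop ▸ Submodule.mem_top
    refine Submodule.iSup_induction (motive := fun x => ⁅x, y⁆ = 0) _ hx ?_ (by simp)
      (fun a b ha hb => by show ⁅a + b, y⁆ = 0; rw [add_lie, ha, hb, add_zero])
    intro μ x hxμ
    refine Submodule.iSup_induction (motive := fun y => ⁅x, y⁆ = 0) _ hy ?_ (by simp)
      (fun a b ha hb => by show ⁅x, a + b⁆ = 0; rw [lie_add, ha, hb, add_zero])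
    intro ν y hyν
    exact hbr μ ν x y hxμ hyν
  -- contradiction: the Killing form vanishes
  obtain ⟨x, hx0⟩ := exists_ne (0 : L)
  have had : LieAlgebra.ad ℝ L x = 0 := by
    ext y; simpa using habelian x y
  have : κ x x = 0 := by
    rw [hκdef, killingForm_apply_apply, had]
    simp
  exact absurd this (ne_of_lt (hneg x hx0))
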